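/- Let A be the evolution algebra over R = ℤ/36ℤ with basis x_1, x_2 and structure coefficient matrix C = [[6, 2], [2, 12]] (so x_1·x_1 = 6x_1 + 2x_2 and x_2·x_2 = 2x_1 + 12x_2). Then A is not nilpotent (for every n ≥ 2 the alternating coefficient product C(2,1)·C(1,2)·C(2,1)⋯ of n−1 factors equals 2^{n-1} ≠ 0 in ℤ/36ℤ), and moreover A is not nil: the element a = x_1 + x_2 satisfies a^n ≠ 0 for every n ≥ 1. (Example 3.2) -/

import Mathlib

/-!
Evolution algebra over `R = ℤ/36ℤ` on the basis `x_1, x_2` (the standard basis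
of `Fin 2 → ZMod 36`), with structure coefficient matrix
`C = !![6, 2; 2, 12]`, so `x_1·x_1 = 6x_1 + 2x_2` and `x_2·x_2 = 2x_1 + 12x_2`;
concretely `(a · b)(k) = ∑_i a(i) * b(i) * C(k,i)`.
-/
def evolMulFin {R : Type*} [CommRing R] {N : ℕ} (C : Matrix (Fin N) (Fin N) R)
    (a b : Fin N → R) : Fin N → R :=
  fun k => ∑ i, a i * b i * C k i

/-- Principal powers: `ppow mul a n = aⁿ` for `n ≥ 1`, defined by
`a^1 = a` and `a^{n+1} = a^n · a`. -/
def ppow {A : Type*} (mul : A → A → A) (a : A) : ℕ → A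
  | 0 => a
  | 1 => a
  | n + 2 => mul (ppow mul a (n + 1)) a

/-- Left-normed products: `lnp mul f m = ((f 0 · f 1) · f 2) ⋯ · f m`
is the left-normed product of the `m + 1` elements `f 0, …, f m`. -/
def lnp {A : Type*} (mul : A → A → A) (f : ℕ → A) : ℕ → A
  | 0 => f 0
  | m + 1 => mul (lnp mul f m) (f (m + 1))

/-- The structure coefficient matrix of Example 3.2. -/
def C36 : Matrix (Fin 2) (Fin 2) (ZMod 36) := !![6, 2; 2, 12]

/-- `2^k ≠ 0` in `ℤ/36ℤ`, since `2` is a unit mod `9`. -/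
lemma two_pow_ne_zero_zmod36 (k : ℕ) : (2 : ZMod 36) ^ k ≠ 0 := by
  intro h
  have h9 := congrArg (ZMod.castHom (by norm_num : (9:ℕ) ∣ 36) (ZMod 9)) h
  simp only [map_pow, map_ofNat, map_zero] at h9
  haveI : Nontrivial (ZMod 9) := ⟨0, 1, by decide⟩
  exact ((IsUnit.of_mul_eq_one (a := (2 : ZMod 9)) 5 (by decide)).pow k).ne_zero h9

/-- The alternating sequence of basis vectors `x_1, x_1, x_2, x_1, x_2, …`. -/
def fSeq : ℕ → Fin 2 → ZMod 36
  | 0 => fun k => if (k : ℕ) = 0 then 1 else 0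
  | (i+1) => fun k => if (k : ℕ) = i % 2 then 1 else 0

/-- The left-normed products of the alternating basis sequence. -/
lemma lnp_fSeq (m : ℕ) :
    (m % 2 = 0 → lnp (evolMulFin C36) fSeq (m+1) = fun k => 2^m * C36 k 0) ∧
    (m % 2 = 1 → lnp (evolMulFin C36) fSeq (m+1) = fun k => 2^m * C36 k 1) := by
  induction m with
  | zero => exact ⟨fun _ => by decide, fun h => by simp at h⟩
  | succ m ih =>
    have c10 : C36 1 0 = 2 := by decide
    have c01 : C36 0 1 = 2 := by decide
    rcases Nat.mod_two_eq_zero_or_one m with h | h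
    · have h1 : (m+1) % 2 = 1 := by omega
      refine ⟨fun h' => by omega, fun _ => ?_⟩
      have IH := (ih.1) h
      funext k
      show evolMulFin C36 (lnp (evolMulFin C36) fSeq (m+1)) (fSeq (m+2)) k = _
      rw [IH]
      simp only [evolMulFin, Fin.sum_univ_two, fSeq, h1]
      norm_num [c10, pow_succ]
    · have h1 : (m+1) % 2 = 0 := by omega
      refine ⟨fun _ => ?_, fun h' => by omega⟩
      have IH := (ih.2) h
      funext k
      show evolMulFin C36 (lnp (evolMulFin C36) fSeq (m+1)) (fSeq (m+2)) k = _
      rw [IH]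
      simp only [evolMulFin, Fin.sum_univ_two, fSeq, h1]
      norm_num [c01, pow_succ]

/-- Periodicity of the principal powers of `a = x_1 + x_2`: `a^{k+9} = a^{k+3}`. -/
lemma ppow_periodic (k : ℕ) :
    ppow (evolMulFin C36) (fun _ => (1 : ZMod 36)) (k + 9)
      = ppow (evolMulFin C36) (fun _ => (1 : ZMod 36)) (k + 3) := by
  induction k with
  | zero => decide
  | succ k ih =>
    have e1 : ppow (evolMulFin C36) (fun _ => (1 : ZMod 36)) (k + 1 + 9)
        = evolMulFin C36 (ppow (evolMulFin C36) (fun _ => (1 : ZMod 36)) (k + 9))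
          (fun _ => (1 : ZMod 36)) := rfl
    have e2 : ppow (evolMulFin C36) (fun _ => (1 : ZMod 36)) (k + 1 + 3)
        = evolMulFin C36 (ppow (evolMulFin C36) (fun _ => (1 : ZMod 36)) (k + 3))
          (fun _ => (1 : ZMod 36)) := rfl
    rw [e1, e2, ih]

/-- Example 3.2: The evolution algebra over `ℤ/36ℤ` with
structure matrix `!![6, 2; 2, 12]` is not nilpotent — for every `n ≥ 2` the
alternating coefficient product of `n - 1` factors equals `2^{n-1} ≠ 0` in
`ℤ/36ℤ` — and moreover it is not nil: the element `a = x_1 + x_2`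
(i.e. `fun _ => 1`) satisfies `aⁿ ≠ 0` for every `n ≥ 1`. -/
theorem example_3_2_not_nilpotent_not_nil :
    (∀ n : ℕ, 2 ≤ n → (2 : ZMod 36) ^ (n - 1) ≠ 0) ∧
    ¬ (∃ n : ℕ, 2 ≤ n ∧
        ∀ f : ℕ → (Fin 2 → ZMod 36), lnp (evolMulFin C36) f (n - 1) = 0) ∧
    (∀ n : ℕ, 1 ≤ n →
        ppow (evolMulFin C36) (fun _ => (1 : ZMod 36)) n ≠ 0) := by
  refine ⟨fun n _ => two_pow_ne_zero_zmod36 (n - 1), ?_, ?_⟩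
  · rintro ⟨n, hn, hall⟩
    have h := hall fSeq
    rw [show n - 1 = (n - 2) + 1 by omega] at h
    have hsucc : (n - 2) + 1 = n - 1 := by omega
    rcases Nat.mod_two_eq_zero_or_one (n - 2) with hp | hp
    · rw [(lnp_fSeq (n - 2)).1 hp] at h
      have h1 := congrFun h 1
      have c10 : C36 1 0 = 2 := by decide
      simp only [c10, Pi.zero_apply] at h1
      exact two_pow_ne_zero_zmod36 (n - 1)
        (by rw [← hsucc, pow_succ]; exact h1)
    · rw [(lnp_fSeq (n - 2)).2 hp] at h
      have h1 := congrFun h 0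
      have c01 : C36 0 1 = 2 := by decide
      simp only [c01, Pi.zero_apply] at h1
      exact two_pow_ne_zero_zmod36 (n - 1)
        (by rw [← hsucc, pow_succ]; exact h1)
  · intro n
    induction n using Nat.strong_induction_on with
    | _ n ih =>
      intro hn h0
      by_cases h8 : n ≤ 8
      · interval_cases n <;> revert h0 <;> decide
      · have key : ppow (evolMulFin C36) (fun _ => (1 : ZMod 36)) n
            = ppow (evolMulFin C36) (fun _ => (1 : ZMod 36)) (n - 6) := by
          have := ppow_periodic (n - 9)
          rwa [show n - 9 + 9 = n by omega, show n - 9 + 3 = n - 6 by omega] at this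
        exact ih (n - 6) (by omega) (by omega) (by rw [← key]; exact h0)
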